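/- Let n ≥ 2. An octahedral system without isolated vertex on vertex sets V_1,…,V_n has at least max_{i ≠ j} (|V_i| + |V_j|) − 2 edges. -/

import Mathlib

/-- An octahedral system: an `n`-uniform `n`-partite hypergraph on the vertex sets `V i`
(edges pick one vertex from each `V i`) satisfying the parity condition. -/
def IsOctahedralSystem {α : Type*} [DecidableEq α] {n : ℕ}
    (V : Fin n → Finset α) (E : Finset (Fin n → α)) : Prop :=
  (∀ e ∈ E, ∀ i, e i ∈ V i) ∧
  ∀ X : Fin n → Finset α, (∀ i, X i ⊆ V i) → (∀ i, (X i).card = 2) →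
    Even ((E.filter fun e => ∀ i, e i ∈ X i).card)

/-- Every vertex belongs to at least one edge. -/
def NoIsolatedVertex {α : Type*} {n : ℕ}
    (V : Fin n → Finset α) (E : Finset (Fin n → α)) : Prop :=
  ∀ i : Fin n, ∀ v ∈ V i, ∃ e ∈ E, e i = v


private lemma octahedral_key {α : Type*} [DecidableEq α] {n : ℕ}
    (V : Fin n → Finset α) (E : Finset (Fin n → α))
    (hV : ∀ e ∈ E, ∀ i, e i ∈ V i)
    (hpar : ∀ X : Fin n → Finset α, (∀ i, X i ⊆ V i) → (∀ i, (X i).card = 2) →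
      Even ((E.filter fun e => ∀ i, e i ∈ X i).card))
    (hcard : ∀ i, 2 ≤ (V i).card)
    {i j : Fin n} (hij : i ≠ j)
    {e₀ : Fin n → α} (he₀ : e₀ ∈ E)
    (huniq : ∀ e' ∈ E, e' i = e₀ i → e' j = e₀ j → e' = e₀)
    {u' w' : α} (hu'V : u' ∈ V i) (hu' : u' ≠ e₀ i) (hw'V : w' ∈ V j) (hw' : w' ≠ e₀ j) :
    (∃ e ∈ E, e i = e₀ i ∧ e j = w') ∨ (∃ e ∈ E, e i = u' ∧ e j = e₀ j) ∨
      (∃ e ∈ E, e i = u' ∧ e j = w') := by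
  by_contra hcon
  push_neg at hcon
  obtain ⟨h1, h2, h3⟩ := hcon
  have hz : ∀ k, ∃ x, x ∈ V k ∧ x ≠ e₀ k := fun k =>
    Finset.exists_mem_ne (by have := hcard k; omega) _
  choose z hzV hzne using hz
  set X : Fin n → Finset α := fun k =>
    if k = i then {e₀ i, u'} else if k = j then {e₀ j, w'} else {e₀ k, z k} with hX
  have hsub : ∀ k, X k ⊆ V k := by
    intro k
    simp only [hX]
    split_ifs with hki hkj
    · subst hki
      intro x hx
      rcases Finset.mem_insert.mp hx with rfl | hx
      · exact hV e₀ he₀ _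
      · rw [Finset.mem_singleton] at hx; subst hx; exact hu'V
    · subst hkj
      intro x hx
      rcases Finset.mem_insert.mp hx with rfl | hx
      · exact hV e₀ he₀ _
      · rw [Finset.mem_singleton] at hx; subst hx; exact hw'V
    · intro x hx
      rcases Finset.mem_insert.mp hx with rfl | hx
      · exact hV e₀ he₀ _
      · rw [Finset.mem_singleton] at hx; subst hx; exact hzV k
  have hc2 : ∀ k, (X k).card = 2 := by
    intro k
    simp only [hX]
    split_ifs with hki hkj
    · subst hki; exact Finset.card_pair (Ne.symm hu')
    · subst hkj; exact Finset.card_pair (Ne.symm hw')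
    · exact Finset.card_pair (Ne.symm (hzne k))
  have heven := hpar X hsub hc2
  have he₀X : e₀ ∈ E.filter (fun e => ∀ i, e i ∈ X i) := by
    refine Finset.mem_filter.mpr ⟨he₀, fun k => ?_⟩
    simp only [hX]
    split_ifs with hki hkj
    · subst hki; exact Finset.mem_insert_self _ _
    · subst hkj; exact Finset.mem_insert_self _ _
    · exact Finset.mem_insert_self _ _
  have hlt : 1 < (E.filter (fun e => ∀ i, e i ∈ X i)).card := by
    have hpos : 0 < (E.filter (fun e => ∀ i, e i ∈ X i)).card :=
      Finset.card_pos.mpr ⟨e₀, he₀X⟩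
    obtain ⟨m, hm⟩ := heven
    rw [hm] at hpos ⊢
    have hm1 : 1 ≤ m := Nat.pos_of_ne_zero (by rintro rfl; exact absurd hpos (by simp))
    exact lt_of_lt_of_le one_lt_two (Nat.add_le_add hm1 hm1)
  obtain ⟨e', he'X, he'ne⟩ := Finset.exists_mem_ne hlt e₀
  obtain ⟨he'E, hXmem⟩ := Finset.mem_filter.mp he'X
  have hXi : e' i ∈ ({e₀ i, u'} : Finset α) := by
    have h := hXmem i
    rw [hX] at h
    simpa only [if_pos rfl, ↓reduceIte] using h
  have hXj : e' j ∈ ({e₀ j, w'} : Finset α) := by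
    have h := hXmem j
    rw [hX] at h
    simpa only [if_neg (Ne.symm hij), if_pos rfl, ↓reduceIte] using h
  rcases Finset.mem_insert.mp hXi with hei | hei
  · rcases Finset.mem_insert.mp hXj with hej | hej
    · exact he'ne (huniq e' he'E hei hej)
    · rw [Finset.mem_singleton] at hej; exact h1 e' he'E hei hej
  · rw [Finset.mem_singleton] at hei
    rcases Finset.mem_insert.mp hXj with hej | hej
    · exact h2 e' he'E hei hej
    · rw [Finset.mem_singleton] at hej; exact h3 e' he'E hei hej

theorem octahedral_no_isolated_lower_bound {α : Type*} [DecidableEq α] {n : ℕ}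
    (hn : 2 ≤ n)
    (V : Fin n → Finset α) (E : Finset (Fin n → α))
    (hdisj : ∀ i j : Fin n, i ≠ j → Disjoint (V i) (V j))
    (hcard : ∀ i, 2 ≤ (V i).card)
    (hoct : IsOctahedralSystem V E)
    (hiso : NoIsolatedVertex V E) :
    ∀ i j : Fin n, i ≠ j → (V i).card + (V j).card - 2 ≤ E.card := by
  obtain ⟨hV, hpar⟩ := hoct
  intro i j hij
  classical
  set G : Finset (α × α) := E.image (fun e => (e i, e j)) with hG
  have hGE : G.card ≤ E.card := Finset.card_image_le
  have hGmem : ∀ u w : α, (u, w) ∈ G ↔ ∃ e ∈ E, e i = u ∧ e j = w := by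
    intro u w
    constructor
    · intro h
      obtain ⟨e, heE, heq⟩ := Finset.mem_image.mp h
      exact ⟨e, heE, congrArg Prod.fst heq, congrArg Prod.snd heq⟩
    · rintro ⟨e, heE, h1, h2⟩
      exact Finset.mem_image.mpr ⟨e, heE, by rw [h1, h2]⟩
  have hVi : (V i).card ≤ G.card := by
    have hsub : V i ⊆ G.image Prod.fst := by
      intro u hu
      obtain ⟨e, heE, hei⟩ := hiso i u hu
      exact Finset.mem_image.mpr ⟨(u, e j), (hGmem u (e j)).mpr ⟨e, heE, hei, rfl⟩, rfl⟩
    exact le_trans (Finset.card_le_card hsub) Finset.card_image_le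
  have hVj : (V j).card ≤ G.card := by
    have hsub : V j ⊆ G.image Prod.snd := by
      intro w hw
      obtain ⟨e, heE, hej⟩ := hiso j w hw
      exact Finset.mem_image.mpr ⟨(e i, w), (hGmem (e i) w).mpr ⟨e, heE, rfl, hej⟩, rfl⟩
    exact le_trans (Finset.card_le_card hsub) Finset.card_image_le
  by_cases hA : ∀ e ∈ E, ∃ e' ∈ E, e' ≠ e ∧ e' i = e i ∧ e' j = e j
  · -- every pair has multiplicity at least 2
    have h2 : 2 * G.card ≤ E.card := by
      rw [Finset.card_eq_sum_card_image (fun e => (e i, e j)) E]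
      have hfib : ∀ b ∈ G, 2 ≤ (E.filter fun e => (e i, e j) = b).card := by
        intro b hb
        obtain ⟨e, heE, heb⟩ := Finset.mem_image.mp hb
        obtain ⟨e', he'E, hne, hi', hj'⟩ := hA e heE
        refine Finset.one_lt_card.mpr ⟨e', Finset.mem_filter.mpr ⟨he'E, ?_⟩, e,
          Finset.mem_filter.mpr ⟨heE, heb⟩, hne⟩
        rw [show (e' i, e' j) = (e i, e j) from by rw [hi', hj']]
        exact heb
      calc 2 * G.card = ∑ _b ∈ G, 2 := by rw [Finset.sum_const, smul_eq_mul, mul_comm]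
        _ ≤ ∑ b ∈ G, (E.filter fun e => (e i, e j) = b).card := Finset.sum_le_sum hfib
    omega
  · push_neg at hA
    obtain ⟨e₀, he₀E, hu⟩ := hA
    have huniq : ∀ e' ∈ E, e' i = e₀ i → e' j = e₀ j → e' = e₀ := by
      intro e' he' h1 h2
      by_contra hne
      exact hu e' he' hne h1 h2
    have hu₀V : e₀ i ∈ V i := hV e₀ he₀E i
    have hw₀V : e₀ j ∈ V j := hV e₀ he₀E j
    have hu₀w₀G : (e₀ i, e₀ j) ∈ G := (hGmem _ _).mpr ⟨e₀, he₀E, rfl, rfl⟩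
    set A : Finset α := (V i).filter (fun u => (u, e₀ j) ∈ G) with hAdef
    set B : Finset α := (V j).filter (fun w => (e₀ i, w) ∈ G) with hBdef
    have hAsub : A ⊆ V i := Finset.filter_subset _ _
    have hBsub : B ⊆ V j := Finset.filter_subset _ _
    have hu₀A : e₀ i ∈ A := Finset.mem_filter.mpr ⟨hu₀V, hu₀w₀G⟩
    have hw₀B : e₀ j ∈ B := Finset.mem_filter.mpr ⟨hw₀V, hu₀w₀G⟩
    have hApos : 1 ≤ A.card := Finset.card_pos.mpr ⟨_, hu₀A⟩
    have hBpos : 1 ≤ B.card := Finset.card_pos.mpr ⟨_, hw₀B⟩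
    have hAa : A.card ≤ (V i).card := Finset.card_le_card hAsub
    have hBb : B.card ≤ (V j).card := Finset.card_le_card hBsub
    have hbip : ∀ u' ∈ V i \ A, ∀ w' ∈ V j \ B, (u', w') ∈ G := by
      intro u' hu' w' hw'
      obtain ⟨hu'V, hu'A⟩ := Finset.mem_sdiff.mp hu'
      obtain ⟨hw'V, hw'B⟩ := Finset.mem_sdiff.mp hw'
      have hu'w₀ : (u', e₀ j) ∉ G := fun h => hu'A (Finset.mem_filter.mpr ⟨hu'V, h⟩)
      have hu₀w' : (e₀ i, w') ∉ G := fun h => hw'B (Finset.mem_filter.mpr ⟨hw'V, h⟩)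
      have hu'ne : u' ≠ e₀ i := fun h => hu'w₀ (by rw [h]; exact hu₀w₀G)
      have hw'ne : w' ≠ e₀ j := fun h => hu₀w' (by rw [h]; exact hu₀w₀G)
      rcases octahedral_key V E hV hpar hcard hij he₀E huniq hu'V hu'ne hw'V hw'ne with
        h | h | h
      · exact absurd ((hGmem _ _).mpr h) hu₀w'
      · exact absurd ((hGmem _ _).mpr h) hu'w₀
      · exact (hGmem _ _).mpr h
    have hex1 : ∀ u : α, ∃ w : α, u ∈ V i → (u, w) ∈ G := by
      intro u
      by_cases h : u ∈ V i
      · obtain ⟨e, heE, hei⟩ := hiso i u h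
        exact ⟨e j, fun _ => (hGmem _ _).mpr ⟨e, heE, hei, rfl⟩⟩
      · exact ⟨e₀ j, fun h' => absurd h' h⟩
    choose fI hfI using hex1
    have hex2 : ∀ w : α, ∃ u : α, w ∈ V j → (u, w) ∈ G := by
      intro w
      by_cases h : w ∈ V j
      · obtain ⟨e, heE, hej⟩ := hiso j w h
        exact ⟨e i, fun _ => (hGmem _ _).mpr ⟨e, heE, rfl, hej⟩⟩
      · exact ⟨e₀ i, fun h' => absurd h' h⟩
    choose fJ hfJ using hex2
    by_cases hq : V j ⊆ B
    · -- every vertex of V j is adjacent to e₀ i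
      have hBeq : B = V j := Finset.Subset.antisymm hBsub hq
      have hS1G : B.image (fun w => (e₀ i, w)) ⊆ G := by
        intro p hp
        obtain ⟨w, hw, rfl⟩ := Finset.mem_image.mp hp
        exact (Finset.mem_filter.mp hw).2
      have hS2G : (A.erase (e₀ i)).image (fun u => (u, e₀ j)) ⊆ G := by
        intro p hp
        obtain ⟨u, hu, rfl⟩ := Finset.mem_image.mp hp
        exact (Finset.mem_filter.mp (Finset.mem_of_mem_erase hu)).2
      have hS3G : (V i \ A).image (fun u => (u, fI u)) ⊆ G := by
        intro p hp
        obtain ⟨u, hu, rfl⟩ := Finset.mem_image.mp hp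
        exact hfI u (Finset.mem_sdiff.mp hu).1
      have hd23 : Disjoint ((A.erase (e₀ i)).image (fun u => (u, e₀ j)))
          ((V i \ A).image (fun u => (u, fI u))) := by
        rw [Finset.disjoint_left]
        rintro p hp hp'
        obtain ⟨u, hu, rfl⟩ := Finset.mem_image.mp hp
        obtain ⟨u', hu', heq⟩ := Finset.mem_image.mp hp'
        have huu : u' = u := congrArg Prod.fst heq
        rw [huu] at hu'
        exact (Finset.mem_sdiff.mp hu').2 (Finset.mem_of_mem_erase hu)
      have hd123 : Disjoint (B.image (fun w => (e₀ i, w)))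
          ((A.erase (e₀ i)).image (fun u => (u, e₀ j)) ∪
            (V i \ A).image (fun u => (u, fI u))) := by
        rw [Finset.disjoint_left]
        rintro p hp hp'
        obtain ⟨w, hw, rfl⟩ := Finset.mem_image.mp hp
        rcases Finset.mem_union.mp hp' with h | h
        · obtain ⟨u, hu, heq⟩ := Finset.mem_image.mp h
          have hu1 : u = e₀ i := congrArg Prod.fst heq
          exact (Finset.mem_erase.mp hu).1 hu1
        · obtain ⟨u, hu, heq⟩ := Finset.mem_image.mp h
          have hu1 : u = e₀ i := congrArg Prod.fst heq
          rw [hu1] at hu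
          exact (Finset.mem_sdiff.mp hu).2 hu₀A
      have hsub : B.image (fun w => (e₀ i, w)) ∪
          ((A.erase (e₀ i)).image (fun u => (u, e₀ j)) ∪
            (V i \ A).image (fun u => (u, fI u))) ⊆ G :=
        Finset.union_subset hS1G (Finset.union_subset hS2G hS3G)
      have hc := Finset.card_le_card hsub
      rw [Finset.card_union_of_disjoint hd123, Finset.card_union_of_disjoint hd23,
        Finset.card_image_of_injOn (fun x _ y _ h => congrArg Prod.snd h),
        Finset.card_image_of_injOn (fun x _ y _ h => congrArg Prod.fst h),
        Finset.card_image_of_injOn (fun x _ y _ h => congrArg Prod.fst h),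
        Finset.card_erase_of_mem hu₀A, Finset.card_sdiff_of_subset hAsub, hBeq] at hc
      omega
    · by_cases hp : V i ⊆ A
      · -- every vertex of V i is adjacent to e₀ j
        have hAeq : A = V i := Finset.Subset.antisymm hAsub hp
        have hS1G : A.image (fun u => (u, e₀ j)) ⊆ G := by
          intro p hp'
          obtain ⟨u, hu, rfl⟩ := Finset.mem_image.mp hp'
          exact (Finset.mem_filter.mp hu).2
        have hS2G : (B.erase (e₀ j)).image (fun w => (e₀ i, w)) ⊆ G := by
          intro p hp'
          obtain ⟨w, hw, rfl⟩ := Finset.mem_image.mp hp'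
          exact (Finset.mem_filter.mp (Finset.mem_of_mem_erase hw)).2
        have hS3G : (V j \ B).image (fun w => (fJ w, w)) ⊆ G := by
          intro p hp'
          obtain ⟨w, hw, rfl⟩ := Finset.mem_image.mp hp'
          exact hfJ w (Finset.mem_sdiff.mp hw).1
        have hd23 : Disjoint ((B.erase (e₀ j)).image (fun w => (e₀ i, w)))
            ((V j \ B).image (fun w => (fJ w, w))) := by
          rw [Finset.disjoint_left]
          rintro p hp' hp''
          obtain ⟨w, hw, rfl⟩ := Finset.mem_image.mp hp'
          obtain ⟨w', hw', heq⟩ := Finset.mem_image.mp hp''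
          have hww : w' = w := congrArg Prod.snd heq
          rw [hww] at hw'
          exact (Finset.mem_sdiff.mp hw').2 (Finset.mem_of_mem_erase hw)
        have hd123 : Disjoint (A.image (fun u => (u, e₀ j)))
            ((B.erase (e₀ j)).image (fun w => (e₀ i, w)) ∪
              (V j \ B).image (fun w => (fJ w, w))) := by
          rw [Finset.disjoint_left]
          rintro p hp' hp''
          obtain ⟨u, hu, rfl⟩ := Finset.mem_image.mp hp'
          rcases Finset.mem_union.mp hp'' with h | h
          · obtain ⟨w, hw, heq⟩ := Finset.mem_image.mp h
            have hw1 : w = e₀ j := congrArg Prod.snd heq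
            exact (Finset.mem_erase.mp hw).1 hw1
          · obtain ⟨w, hw, heq⟩ := Finset.mem_image.mp h
            have hw1 : w = e₀ j := congrArg Prod.snd heq
            rw [hw1] at hw
            exact (Finset.mem_sdiff.mp hw).2 hw₀B
        have hsub : A.image (fun u => (u, e₀ j)) ∪
            ((B.erase (e₀ j)).image (fun w => (e₀ i, w)) ∪
              (V j \ B).image (fun w => (fJ w, w))) ⊆ G :=
          Finset.union_subset hS1G (Finset.union_subset hS2G hS3G)
        have hc := Finset.card_le_card hsub
        rw [Finset.card_union_of_disjoint hd123, Finset.card_union_of_disjoint hd23,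
          Finset.card_image_of_injOn (fun x _ y _ h => congrArg Prod.fst h),
          Finset.card_image_of_injOn (fun x _ y _ h => congrArg Prod.snd h),
          Finset.card_image_of_injOn (fun x _ y _ h => congrArg Prod.snd h),
          Finset.card_erase_of_mem hw₀B, Finset.card_sdiff_of_subset hBsub, hAeq] at hc
        omega
      · -- both V i \ A and V j \ B are nonempty
        obtain ⟨u₁, hu₁V, hu₁A⟩ := Finset.not_subset.mp hp
        obtain ⟨w₁, hw₁V, hw₁B⟩ := Finset.not_subset.mp hq
        have hP1 : 1 ≤ (V i \ A).card :=
          Finset.card_pos.mpr ⟨u₁, Finset.mem_sdiff.mpr ⟨hu₁V, hu₁A⟩⟩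
        have hQ1 : 1 ≤ (V j \ B).card :=
          Finset.card_pos.mpr ⟨w₁, Finset.mem_sdiff.mpr ⟨hw₁V, hw₁B⟩⟩
        have hS1G : A.image (fun u => (u, e₀ j)) ⊆ G := by
          intro p hp'
          obtain ⟨u, hu, rfl⟩ := Finset.mem_image.mp hp'
          exact (Finset.mem_filter.mp hu).2
        have hS2G : (B.erase (e₀ j)).image (fun w => (e₀ i, w)) ⊆ G := by
          intro p hp'
          obtain ⟨w, hw, rfl⟩ := Finset.mem_image.mp hp'
          exact (Finset.mem_filter.mp (Finset.mem_of_mem_erase hw)).2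
        have hS3G : (V i \ A) ×ˢ (V j \ B) ⊆ G := by
          intro p hp'
          obtain ⟨h1, h2⟩ := Finset.mem_product.mp hp'
          have := hbip p.1 h1 p.2 h2
          rwa [Prod.mk.eta] at this
        have hd23 : Disjoint ((B.erase (e₀ j)).image (fun w => (e₀ i, w)))
            ((V i \ A) ×ˢ (V j \ B)) := by
          rw [Finset.disjoint_left]
          rintro p hp' hp''
          obtain ⟨w, hw, rfl⟩ := Finset.mem_image.mp hp'
          have h1 : e₀ i ∈ V i \ A := (Finset.mem_product.mp hp'').1
          exact (Finset.mem_sdiff.mp h1).2 hu₀A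
        have hd123 : Disjoint (A.image (fun u => (u, e₀ j)))
            ((B.erase (e₀ j)).image (fun w => (e₀ i, w)) ∪ (V i \ A) ×ˢ (V j \ B)) := by
          rw [Finset.disjoint_left]
          rintro p hp' hp''
          obtain ⟨u, hu, rfl⟩ := Finset.mem_image.mp hp'
          rcases Finset.mem_union.mp hp'' with h | h
          · obtain ⟨w, hw, heq⟩ := Finset.mem_image.mp h
            have hw1 : w = e₀ j := congrArg Prod.snd heq
            exact (Finset.mem_erase.mp hw).1 hw1
          · have h2 : e₀ j ∈ V j \ B := (Finset.mem_product.mp h).2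
            exact (Finset.mem_sdiff.mp h2).2 hw₀B
        have hsub : A.image (fun u => (u, e₀ j)) ∪
            ((B.erase (e₀ j)).image (fun w => (e₀ i, w)) ∪ (V i \ A) ×ˢ (V j \ B)) ⊆ G :=
          Finset.union_subset hS1G (Finset.union_subset hS2G hS3G)
        have hc := Finset.card_le_card hsub
        rw [Finset.card_union_of_disjoint hd123, Finset.card_union_of_disjoint hd23,
          Finset.card_image_of_injOn (fun x _ y _ h => congrArg Prod.fst h),
          Finset.card_image_of_injOn (fun x _ y _ h => congrArg Prod.snd h),
          Finset.card_erase_of_mem hw₀B, Finset.card_product] at hc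
        obtain ⟨M, hMeq⟩ : ∃ M, M = (V i \ A).card * (V j \ B).card :=
          ⟨_, rfl⟩
        rw [← hMeq] at hc
        have hsd1 : (V i \ A).card = (V i).card - A.card := Finset.card_sdiff_of_subset hAsub
        have hsd2 : (V j \ B).card = (V j).card - B.card := Finset.card_sdiff_of_subset hBsub
        have hPQ : (V i \ A).card + (V j \ B).card ≤ M + 1 := by
          rw [hMeq]
          obtain ⟨p', hp'⟩ := Nat.exists_eq_add_of_le hP1
          obtain ⟨q', hq'⟩ := Nat.exists_eq_add_of_le hQ1
          rw [hp', hq']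
          nlinarith [Nat.zero_le (p' * q')]
        omega
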